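/- Discrete a posteriori error bound: let A be an n×n real matrix with ‖exp(tA)‖ ≤ c·e^{ωt} for all t ≥ 0, where c ≥ 0, ω ≤ 0. Suppose e : [t_i, ∞) → ℝ^n satisfies e'(t) = A e(t) + τ(t) with ‖τ(t)‖ ≤ Cε for all t ≥ t_i and ‖e(t_i)‖ ≤ C_i ε. Then for all t ≥ t_i: if ω < 0, ‖e(t)‖ ≤ c·(e^{ω(t-t_i)} C_i + C·(e^{ω(t-t_i)} - 1)/ω)·ε; and if ω = 0, ‖e(t)‖ ≤ c·(C_i + C·(t - t_i))·ε. -/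

import Mathlib

open NormedSpace

/-- Discrete a posteriori error bound (Duhamel + semigroup stability): if
`‖exp(tA)‖ ≤ c·e^{ωt}` for `t ≥ 0` with `ω ≤ 0`, and `e' = A e + τ` with `‖τ‖ ≤ C ε` and
`‖e(tᵢ)‖ ≤ Cᵢ ε`, then `‖e(t)‖` obeys the stated exponential bounds for all `t ≥ tᵢ`. -/
theorem aposteriori_error_bound
    {n : ℕ}
    (A : EuclideanSpace ℝ (Fin n) →L[ℝ] EuclideanSpace ℝ (Fin n))
    (c ω : ℝ) (hc : 0 ≤ c) (hω : ω ≤ 0)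
    (hsg : ∀ t : ℝ, 0 ≤ t → ‖NormedSpace.exp (t • A)‖ ≤ c * Real.exp (ω * t))
    (tᵢ : ℝ) (e τ : ℝ → EuclideanSpace ℝ (Fin n))
    (hode : ∀ t, tᵢ ≤ t → HasDerivAt e (A (e t) + τ t) t)
    (hτcont : ContinuousOn τ (Set.Ici tᵢ))
    (C Cᵢ ε : ℝ) (hε : 0 ≤ ε)
    (hτ : ∀ t, tᵢ ≤ t → ‖τ t‖ ≤ C * ε)
    (hinit : ‖e tᵢ‖ ≤ Cᵢ * ε) :
    ∀ t, tᵢ ≤ t →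
      (ω < 0 → ‖e t‖ ≤
        c * (Real.exp (ω * (t - tᵢ)) * Cᵢ + C * ((Real.exp (ω * (t - tᵢ)) - 1) / ω)) * ε)
      ∧ (ω = 0 → ‖e t‖ ≤ c * (Cᵢ + C * (t - tᵢ)) * ε) := by
  intro t ht
  set M : ℝ → (EuclideanSpace ℝ (Fin n) →L[ℝ] EuclideanSpace ℝ (Fin n)) :=
    fun s => NormedSpace.exp ((t - s) • A) with hM
  have hMderiv : ∀ s : ℝ, HasDerivAt M (-(M s * A)) s := by
    intro s
    have h1 : HasDerivAt (fun s : ℝ => t - s) (-1) s := by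
      simpa using (hasDerivAt_id s).const_sub t
    have h2 := (hasDerivAt_exp_smul_const (𝕂 := ℝ) A (t - s)).scomp s h1
    simpa [neg_smul, one_smul, hM, Function.comp_def] using h2
  have hMcont : Continuous M := by
    exact continuous_iff_continuousAt.2 fun s => (hMderiv s).continuousAt
  -- Duhamel: derivative of s ↦ M s (e s) is M s (τ s) on [tᵢ, t]
  have hgderiv : ∀ s, tᵢ ≤ s → HasDerivAt (fun s => M s (e s)) (M s (τ s)) s := by
    intro s hs
    have := (hMderiv s).clm_apply (hode s hs)
    have heq : (-(M s * A)) (e s) + (M s) (A (e s) + τ s) = M s (τ s) := by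
      simp [ContinuousLinearMap.mul_apply, map_add]
    rwa [heq] at this
  have hMτcont : ContinuousOn (fun s => M s (τ s)) (Set.Icc tᵢ t) := by
    exact (hMcont.continuousOn.clm_apply (hτcont.mono Set.Icc_subset_Ici_self))
  have hint : IntervalIntegrable (fun s => M s (τ s)) MeasureTheory.volume tᵢ t := by
    apply ContinuousOn.intervalIntegrable
    rwa [Set.uIcc_of_le ht]
  have hduhamel : (∫ s in tᵢ..t, M s (τ s)) = M t (e t) - M tᵢ (e tᵢ) := by
    apply intervalIntegral.integral_eq_sub_of_hasDerivAt
    · intro s hs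
      rw [Set.uIcc_of_le ht] at hs
      exact hgderiv s hs.1
    · exact hint
  have hMt : M t (e t) = e t := by
    show (NormedSpace.exp ((t - t) • A)) (e t) = e t
    rw [sub_self, zero_smul ℝ A, NormedSpace.exp_zero, ContinuousLinearMap.one_apply]
  have hCε : 0 ≤ C * ε := le_trans (norm_nonneg _) (hτ tᵢ le_rfl)
  -- norm bound on M s
  have hMnorm : ∀ s, tᵢ ≤ s → s ≤ t → ‖M s‖ ≤ c * Real.exp (ω * (t - s)) := by
    intro s hs hst
    exact hsg (t - s) (by linarith)
  -- main estimate
  have hmain : ‖e t‖ ≤ c * Real.exp (ω * (t - tᵢ)) * (Cᵢ * ε)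
      + ∫ s in tᵢ..t, c * Real.exp (ω * (t - s)) * (C * ε) := by
    have he : e t = M tᵢ (e tᵢ) + ∫ s in tᵢ..t, M s (τ s) := by
      rw [hduhamel, hMt]
      abel
    have h1 : ‖M tᵢ (e tᵢ)‖ ≤ c * Real.exp (ω * (t - tᵢ)) * (Cᵢ * ε) := by
      calc ‖M tᵢ (e tᵢ)‖ ≤ ‖M tᵢ‖ * ‖e tᵢ‖ := (M tᵢ).le_opNorm _
        _ ≤ (c * Real.exp (ω * (t - tᵢ))) * (Cᵢ * ε) := by
            apply mul_le_mul (hMnorm tᵢ le_rfl ht) hinit (norm_nonneg _)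
            positivity
    have hnormint : IntervalIntegrable (fun s => ‖M s (τ s)‖) MeasureTheory.volume tᵢ t := by
      apply ContinuousOn.intervalIntegrable
      rw [Set.uIcc_of_le ht]
      exact hMτcont.norm
    have hgint : IntervalIntegrable (fun s => c * Real.exp (ω * (t - s)) * (C * ε))
        MeasureTheory.volume tᵢ t := by
      apply Continuous.intervalIntegrable
      fun_prop
    have h2 : ‖∫ s in tᵢ..t, M s (τ s)‖ ≤ ∫ s in tᵢ..t, c * Real.exp (ω * (t - s)) * (C * ε) :=
      calc ‖∫ s in tᵢ..t, M s (τ s)‖ ≤ ∫ s in tᵢ..t, ‖M s (τ s)‖ :=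
          intervalIntegral.norm_integral_le_integral_norm ht
        _ ≤ _ := by
          apply intervalIntegral.integral_mono_on ht hnormint hgint
          intro s hs
          calc ‖M s (τ s)‖ ≤ ‖M s‖ * ‖τ s‖ := (M s).le_opNorm _
            _ ≤ (c * Real.exp (ω * (t - s))) * (C * ε) := by
                apply mul_le_mul (hMnorm s hs.1 hs.2) (hτ s hs.1) (norm_nonneg _)
                positivity
    calc ‖e t‖ = ‖M tᵢ (e tᵢ) + ∫ s in tᵢ..t, M s (τ s)‖ := by rw [← he]
      _ ≤ ‖M tᵢ (e tᵢ)‖ + ‖∫ s in tᵢ..t, M s (τ s)‖ := norm_add_le _ _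
      _ ≤ _ := add_le_add h1 h2
  constructor
  · intro hωneg
    have hωne : ω ≠ 0 := ne_of_lt hωneg
    -- compute the integral
    have hI : (∫ s in tᵢ..t, c * Real.exp (ω * (t - s)) * (C * ε))
        = c * (C * ε) * ((Real.exp (ω * (t - tᵢ)) - 1) / ω) := by
      have hF : ∀ s : ℝ, HasDerivAt (fun s => Real.exp (ω * (t - s)) / (-ω))
          (Real.exp (ω * (t - s))) s := by
        intro s
        have h1 : HasDerivAt (fun s : ℝ => ω * (t - s)) (-ω) s := by
          simpa using ((hasDerivAt_id s).const_sub t).const_mul ω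
        have h3 := h1.exp.div_const (-ω)
        have : Real.exp (ω * (t - s)) * -ω / -ω = Real.exp (ω * (t - s)) := by
          field_simp
        rwa [this] at h3
      have := intervalIntegral.integral_eq_sub_of_hasDerivAt
        (f := fun s => Real.exp (ω * (t - s)) / (-ω))
        (f' := fun s => Real.exp (ω * (t - s)))
        (a := tᵢ) (b := t)
        (fun s _ => hF s)
        (by apply Continuous.intervalIntegrable; fun_prop)
      have hc2 : (∫ s in tᵢ..t, c * Real.exp (ω * (t - s)) * (C * ε))
          = c * (C * ε) * ∫ s in tᵢ..t, Real.exp (ω * (t - s)) := by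
        rw [← intervalIntegral.integral_const_mul]
        congr 1; ext s; ring
      rw [hc2, this]
      simp only [sub_self, mul_zero, Real.exp_zero]
      field_simp [hωne]
      ring
    rw [hI] at hmain
    calc ‖e t‖ ≤ _ := hmain
      _ = c * (Real.exp (ω * (t - tᵢ)) * Cᵢ + C * ((Real.exp (ω * (t - tᵢ)) - 1) / ω)) * ε := by
          ring
  · intro hω0
    subst hω0
    simp only [zero_mul, Real.exp_zero, mul_one, one_mul] at hmain
    rw [intervalIntegral.integral_const] at hmain
    calc ‖e t‖ ≤ _ := hmain
      _ = c * (Cᵢ + C * (t - tᵢ)) * ε := by simp [smul_eq_mul]; ring
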